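/- (Moyal formula for matrix elements) Let a ∈ S(ℝ²ⁿ) and let be its Weyl quantization, Â = (1/(πħ))ⁿ ∬ a(x,p) T̂_GR(x,p) dⁿp dⁿx (weakly interpreted). Then for Ψ, Φ ∈ S(ℝⁿ): ⟨Φ|ÂΨ⟩ = ∬ a(x,p) W_{Ψ,Φ}(x,p) dⁿp dⁿx. -/

import Mathlib

open MeasureTheory Complex

/-- The cross-Wigner distribution of two functions on ℝⁿ. -/
noncomputable def crossWigner (hbar : ℝ) (n : ℕ) (Ψ Φ : (Fin n → ℝ) → ℂ)
    (x p : Fin n → ℝ) : ℂ :=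
  (1 / (2 * Real.pi * hbar)) ^ n *
    ∫ y : Fin n → ℝ,
      Complex.exp (-(Complex.I * ((∑ i, p i * y i : ℝ) : ℂ) / (hbar : ℂ))) *
        Ψ (x + y / 2) * (starRingEnd ℂ) (Φ (x - y / 2))

/-- The Grossmann–Royer operator at `(x₀,p₀)`:
`(T̂_GR(x₀,p₀)f)(u) = e^{(2i/hbar) p₀·(u − x₀)} f(2x₀ − u)`. -/
noncomputable def grossmannRoyer (hbar : ℝ) (n : ℕ) (x₀ p₀ : Fin n → ℝ)
    (f : (Fin n → ℝ) → ℂ) : (Fin n → ℝ) → ℂ :=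
  fun u =>
    Complex.exp (2 * Complex.I * ((∑ i, p₀ i * (u i - x₀ i) : ℝ) : ℂ) / (hbar : ℂ)) *
      f (2 • x₀ - u)

/-- The Weyl quantization of a symbol `a ∈ S(ℝ²ⁿ)`, defined weakly through the
Grossmann–Royer operators: `(Âf)(u) = (1/(π hbar))ⁿ ∬ a(x,p) (T̂_GR(x,p)f)(u) dⁿp dⁿx`. -/
noncomputable def weylQuant (hbar : ℝ) (n : ℕ)
    (a : (Fin n → ℝ) × (Fin n → ℝ) → ℂ) (f : (Fin n → ℝ) → ℂ) :
    (Fin n → ℝ) → ℂ :=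
  fun u =>
    (1 / (Real.pi * hbar)) ^ n *
      ∫ x : Fin n → ℝ, ∫ p : Fin n → ℝ, a (x, p) * grossmannRoyer hbar n x p f u

lemma moyal_norm_exp (r h : ℝ) : ‖Complex.exp (2 * Complex.I * (r:ℂ) / (h:ℂ))‖ = 1 := by
  have : 2 * Complex.I * (r:ℂ) / (h:ℂ) = ((2*r/h : ℝ):ℂ) * Complex.I := by push_cast; ring
  rw [this, Complex.norm_exp_ofReal_mul_I]

/-- Pointwise inner computation: the `u`-integral against the Grossmann–Royer operator
gives the cross-Wigner distribution after a change of variables. -/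
lemma moyal_key (hbar : ℝ) (n : ℕ) (Ψ Φ : SchwartzMap (Fin n → ℝ) ℂ) (x p : Fin n → ℝ) :
    (1 / ((Real.pi : ℂ) * (hbar : ℂ))) ^ n *
      ∫ u : Fin n → ℝ, (starRingEnd ℂ) (Φ u) * grossmannRoyer hbar n x p (⇑Ψ) u
    = crossWigner hbar n (⇑Ψ) (⇑Φ) x p := by
  set g : (Fin n → ℝ) → ℂ := fun y =>
    Complex.exp (-(Complex.I * ((∑ i, p i * y i : ℝ) : ℂ) / (hbar : ℂ))) *
      Ψ (x + y / 2) * (starRingEnd ℂ) (Φ (x - y / 2)) with hgdef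
  have hpt : ∀ u, (starRingEnd ℂ) (Φ u) * grossmannRoyer hbar n x p (⇑Ψ) u
      = g ((2:ℝ) • (x - u)) := by
    intro u
    have e1 : x + ((2:ℝ) • (x - u)) / 2 = 2 • x - u := by
      funext i
      simp only [Pi.add_apply, Pi.div_apply, Pi.smul_apply, Pi.sub_apply, smul_eq_mul,
        Pi.ofNat_apply, Pi.mul_apply, nsmul_eq_mul, Nat.cast_ofNat]
      ring
    have e2 : x - ((2:ℝ) • (x - u)) / 2 = u := by
      funext i
      simp only [Pi.sub_apply, Pi.div_apply, Pi.smul_apply, smul_eq_mul, Pi.ofNat_apply]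
      ring
    have e3 : -(Complex.I * ((∑ i, p i * ((2:ℝ) • (x - u)) i : ℝ) : ℂ) / (hbar : ℂ))
        = 2 * Complex.I * ((∑ i, p i * (u i - x i) : ℝ) : ℂ) / (hbar : ℂ) := by
      have h4 : (∑ i, p i * ((2:ℝ) • (x - u)) i : ℝ) = (-2) * ∑ i, p i * (u i - x i) := by
        rw [Finset.mul_sum]
        refine Finset.sum_congr rfl fun i _ => ?_
        simp only [Pi.smul_apply, Pi.sub_apply, smul_eq_mul]
        ring
      rw [h4]; push_cast; ring
    simp only [hgdef, grossmannRoyer, e1, e2, e3]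
    ring
  have hint : (∫ u : Fin n → ℝ, (starRingEnd ℂ) (Φ u) * grossmannRoyer hbar n x p (⇑Ψ) u)
      = (((2:ℝ) ^ n)⁻¹ : ℝ) • ∫ y, g y := by
    calc (∫ u : Fin n → ℝ, (starRingEnd ℂ) (Φ u) * grossmannRoyer hbar n x p (⇑Ψ) u)
        = ∫ u : Fin n → ℝ, g ((2:ℝ) • (x - u)) := by simp only [hpt]
      _ = ∫ v : Fin n → ℝ, g ((2:ℝ) • v) :=
          integral_sub_left_eq_self (fun v => g ((2:ℝ) • v)) volume x
      _ = |(((2:ℝ) ^ Module.finrank ℝ (Fin n → ℝ))⁻¹)| • ∫ y, g y :=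
          Measure.integral_comp_smul volume g 2
      _ = (((2:ℝ) ^ n)⁻¹ : ℝ) • ∫ y, g y := by
          rw [Module.finrank_fin_fun, abs_of_pos (by positivity)]
  rw [hint, crossWigner, Complex.real_smul]
  rw [← hgdef]
  push_cast
  rw [show ((1 : ℂ) / ((Real.pi : ℂ) * (hbar : ℂ))) ^ n * ((((2:ℂ) ^ n)⁻¹) * ∫ y, g y)
      = ((1 / ((Real.pi : ℂ) * (hbar : ℂ))) * (2:ℂ)⁻¹) ^ n * ∫ y, g y by
    rw [mul_pow, ← inv_pow]; ring]
  congr 2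
  ring

/-- Moyal formula for matrix elements: for a Schwartz symbol `a` with
Weyl quantization `Â` and Schwartz functions Ψ, Φ:
`⟨Φ|ÂΨ⟩ = ∬ a(x,p) W_{Ψ,Φ}(x,p) dⁿp dⁿx`. -/
theorem moyal_matrix_elements (hbar : ℝ) (hh : 0 < hbar) (n : ℕ)
    (a : SchwartzMap ((Fin n → ℝ) × (Fin n → ℝ)) ℂ)
    (Ψ Φ : SchwartzMap (Fin n → ℝ) ℂ) :
    (∫ u : Fin n → ℝ, (starRingEnd ℂ) (Φ u) * weylQuant hbar n (⇑a) (⇑Ψ) u) =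
      ∫ x : Fin n → ℝ, ∫ p : Fin n → ℝ, a (x, p) * crossWigner hbar n Ψ Φ x p := by
  haveI : ((volume : Measure (Fin n → ℝ)).prod (volume : Measure (Fin n → ℝ))).IsAddHaarMeasure :=
    Measure.prod.instIsAddHaarMeasure _ _
  have ha : Integrable (⇑a) ((volume : Measure (Fin n → ℝ)).prod volume) :=
    a.integrable
  obtain ⟨CΨ, hCΨ⟩ : ∃ C, ∀ v, ‖Ψ v‖ ≤ C := by
    obtain ⟨C, hC⟩ := Ψ.decay' 0 0
    exact ⟨C, fun v => by have h := hC v; simp at h; exact h⟩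
  have hCΨ0 : 0 ≤ CΨ := le_trans (norm_nonneg _) (hCΨ 0)
  have hTnorm : ∀ (z : (Fin n → ℝ) × (Fin n → ℝ)) u,
      ‖grossmannRoyer hbar n z.1 z.2 (⇑Ψ) u‖ ≤ CΨ := by
    intro z u
    rw [grossmannRoyer, norm_mul, moyal_norm_exp, one_mul]
    exact hCΨ _
  -- continuity of the full integrand
  have hcont : Continuous (fun q : (Fin n → ℝ) × ((Fin n → ℝ) × (Fin n → ℝ)) =>
      (starRingEnd ℂ) (Φ q.1) * (a q.2 * grossmannRoyer hbar n q.2.1 q.2.2 (⇑Ψ) q.1)) := by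
    simp only [grossmannRoyer]
    have hsum : Continuous (fun q : (Fin n → ℝ) × ((Fin n → ℝ) × (Fin n → ℝ)) =>
        (∑ i, q.2.2 i * (q.1 i - q.2.1 i) : ℝ)) := by
      apply continuous_finset_sum
      intro i _
      exact ((continuous_apply i).comp (continuous_snd.comp continuous_snd)).mul
        (((continuous_apply i).comp continuous_fst).sub
          ((continuous_apply i).comp (continuous_fst.comp continuous_snd)))
    apply Continuous.mul
    · exact continuous_star.comp (Φ.continuous.comp continuous_fst)
    apply Continuous.mul
    · exact a.continuous.comp continuous_snd
    apply Continuous.mul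
    · exact Complex.continuous_exp.comp
        ((continuous_const.mul (Complex.continuous_ofReal.comp hsum)).div_const _)
    · exact Ψ.continuous.comp
        (((continuous_fst.comp continuous_snd).const_smul (2:ℕ)).sub continuous_fst)
  -- per-u integrability in z
  have h1 : ∀ u : Fin n → ℝ, Integrable
      (fun z : (Fin n → ℝ) × (Fin n → ℝ) => a z * grossmannRoyer hbar n z.1 z.2 (⇑Ψ) u)
      ((volume : Measure (Fin n → ℝ)).prod volume) := by
    intro u
    have hTz : Continuous (fun z : (Fin n → ℝ) × (Fin n → ℝ) =>
        grossmannRoyer hbar n z.1 z.2 (⇑Ψ) u) := by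
      simp only [grossmannRoyer]
      have hsum : Continuous (fun z : (Fin n → ℝ) × (Fin n → ℝ) =>
          (∑ i, z.2 i * (u i - z.1 i) : ℝ)) := by
        apply continuous_finset_sum
        intro i _
        exact ((continuous_apply i).comp continuous_snd).mul
          (continuous_const.sub ((continuous_apply i).comp continuous_fst))
      apply Continuous.mul
      · exact Complex.continuous_exp.comp
          ((continuous_const.mul (Complex.continuous_ofReal.comp hsum)).div_const _)
      · exact Ψ.continuous.comp ((continuous_fst.const_smul (2:ℕ)).sub continuous_const)
    have hmul : Integrable
        (fun z : (Fin n → ℝ) × (Fin n → ℝ) =>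
          grossmannRoyer hbar n z.1 z.2 (⇑Ψ) u * a z)
        ((volume : Measure (Fin n → ℝ)).prod volume) :=
      ha.bdd_mul hTz.aestronglyMeasurable (Filter.Eventually.of_forall fun z => hTnorm z u)
    exact hmul.congr (Filter.Eventually.of_forall fun z => mul_comm _ _)
  -- joint integrability
  have h2 : Integrable
      (Function.uncurry fun (u : Fin n → ℝ) (z : (Fin n → ℝ) × (Fin n → ℝ)) =>
        (starRingEnd ℂ) (Φ u) * (a z * grossmannRoyer hbar n z.1 z.2 (⇑Ψ) u))
      ((volume : Measure (Fin n → ℝ)).prod ((volume : Measure (Fin n → ℝ)).prod volume)) := by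
    apply Integrable.mono' (g := fun q => ‖Φ q.1‖ * (‖a q.2‖ * CΨ))
    · exact (Φ.integrable.norm).mul_prod ((a.integrable.norm).mul_const CΨ)
    · exact hcont.aestronglyMeasurable
    · refine Filter.Eventually.of_forall fun q => ?_
      simp only [Function.uncurry, norm_mul, RCLike.norm_conj]
      exact mul_le_mul_of_nonneg_left
        (mul_le_mul_of_nonneg_left (hTnorm q.2 q.1) (norm_nonneg _)) (norm_nonneg _)
  -- the main chain
  calc (∫ u : Fin n → ℝ, (starRingEnd ℂ) (Φ u) * weylQuant hbar n (⇑a) (⇑Ψ) u)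
      = (1 / ((Real.pi : ℂ) * (hbar : ℂ))) ^ n *
          ∫ u : Fin n → ℝ, ∫ z : (Fin n → ℝ) × (Fin n → ℝ),
            (starRingEnd ℂ) (Φ u) * (a z * grossmannRoyer hbar n z.1 z.2 (⇑Ψ) u)
          ∂((volume : Measure (Fin n → ℝ)).prod volume) := by
        rw [← integral_const_mul]
        refine integral_congr_ae (Filter.Eventually.of_forall fun u => ?_)
        simp only [weylQuant]
        rw [show (∫ x : Fin n → ℝ, ∫ p : Fin n → ℝ,
            a (x, p) * grossmannRoyer hbar n x p (⇑Ψ) u)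
            = ∫ z : (Fin n → ℝ) × (Fin n → ℝ),
                a z * grossmannRoyer hbar n z.1 z.2 (⇑Ψ) u
              ∂((volume : Measure (Fin n → ℝ)).prod volume) from
          integral_integral (h1 u)]
        rw [integral_const_mul]
        ring
    _ = (1 / ((Real.pi : ℂ) * (hbar : ℂ))) ^ n *
          ∫ z : (Fin n → ℝ) × (Fin n → ℝ), ∫ u : Fin n → ℝ,
            (starRingEnd ℂ) (Φ u) * (a z * grossmannRoyer hbar n z.1 z.2 (⇑Ψ) u)
          ∂volume ∂((volume : Measure (Fin n → ℝ)).prod volume) := by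
        rw [integral_integral_swap h2]
    _ = ∫ z : (Fin n → ℝ) × (Fin n → ℝ),
          a (z.1, z.2) * crossWigner hbar n (⇑Ψ) (⇑Φ) z.1 z.2
        ∂((volume : Measure (Fin n → ℝ)).prod volume) := by
        rw [← integral_const_mul]
        refine integral_congr_ae (Filter.Eventually.of_forall fun z => ?_)
        have rearr : ∀ u : Fin n → ℝ,
            (starRingEnd ℂ) (Φ u) * (a z * grossmannRoyer hbar n z.1 z.2 (⇑Ψ) u)
            = a z * ((starRingEnd ℂ) (Φ u) * grossmannRoyer hbar n z.1 z.2 (⇑Ψ) u) :=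
          fun u => by ring
        simp only [rearr]
        rw [integral_const_mul]
        rw [show ((1 / ((Real.pi:ℂ) * (hbar:ℂ))) ^ n * (a z *
            ∫ u, (starRingEnd ℂ) (Φ u) * grossmannRoyer hbar n z.1 z.2 (⇑Ψ) u))
            = a z * ((1 / ((Real.pi:ℂ) * (hbar:ℂ))) ^ n *
            ∫ u, (starRingEnd ℂ) (Φ u) * grossmannRoyer hbar n z.1 z.2 (⇑Ψ) u) from by ring]
        rw [moyal_key hbar n Ψ Φ z.1 z.2]
    _ = ∫ x : Fin n → ℝ, ∫ p : Fin n → ℝ, a (x, p) * crossWigner hbar n Ψ Φ x p := by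
        refine (integral_integral
          (f := fun (x p : Fin n → ℝ) => a (x, p) * crossWigner hbar n (⇑Ψ) (⇑Φ) x p) ?_).symm
        have hI : Integrable
            (fun z : (Fin n → ℝ) × (Fin n → ℝ) =>
              ∫ u : Fin n → ℝ, (starRingEnd ℂ) (Φ u) *
                (a z * grossmannRoyer hbar n z.1 z.2 (⇑Ψ) u))
            ((volume : Measure (Fin n → ℝ)).prod volume) :=
          h2.swap.integral_prod_left
        have := (hI.const_mul ((1 / ((Real.pi:ℂ) * (hbar:ℂ))) ^ n))
        refine this.congr (Filter.Eventually.of_forall fun z => ?_)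
        have rearr : ∀ u : Fin n → ℝ,
            (starRingEnd ℂ) (Φ u) * (a z * grossmannRoyer hbar n z.1 z.2 (⇑Ψ) u)
            = a z * ((starRingEnd ℂ) (Φ u) * grossmannRoyer hbar n z.1 z.2 (⇑Ψ) u) :=
          fun u => by ring
        simp only [rearr]
        rw [integral_const_mul]
        rw [show ((1 / ((Real.pi:ℂ) * (hbar:ℂ))) ^ n * (a z *
            ∫ u, (starRingEnd ℂ) (Φ u) * grossmannRoyer hbar n z.1 z.2 (⇑Ψ) u))
            = a z * ((1 / ((Real.pi:ℂ) * (hbar:ℂ))) ^ n *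
            ∫ u, (starRingEnd ℂ) (Φ u) * grossmannRoyer hbar n z.1 z.2 (⇑Ψ) u) from by ring]
        rw [moyal_key hbar n Ψ Φ z.1 z.2]
        rfl
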